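/- arXiv:2108.11237 — 3 statements merged into one kernel-verified Lean document; each statement's English description precedes it below -/
import Mathlib

section
/- Consider the forward-backward system dy/ds = A(y) − B N⁻¹ B* z(s), −dz/ds = (DA(y(s)))* z(s) + DF(y(s)) on [t, T] with y(t) = x, z(T) = DF_T(y(T)). Assume A(0)=0, ‖DA‖≤γ, |A(x)−DA(x)x| ≤ (b/2)|x|, ν|ξ|² ≤ (D²F ξ,ξ), DF(0)=0, ν_T|ξ|² ≤ (D²F_T ξ,ξ) ≤ M_T|ξ|², DF_T(0)=0, (BN⁻¹B*ξ,ξ) ≥ m|ξ|², and b²/16 < (m−k)(ν−k) for some 0 < k < min(m, ν). Then any solution satisfies (x, z(t)) ≥ ν_T |y(T)|² + k ∫ₜᵀ (|y(s)|² + |z(s)|²) ds. -/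
open Set intervalIntegral ContinuousLinearMap
open scoped RealInnerProductSpace

lemma grad_lower_aux {H : Type*} [NormedAddCommGroup H] [InnerProductSpace ℝ H] [CompleteSpace H]
    (F : H → ℝ) (ν : ℝ) (hF : ContDiff ℝ 2 F) (h0 : gradient F 0 = 0)
    (hlow : ∀ x ξ : H, ν * ‖ξ‖ ^ 2 ≤ fderiv ℝ (fun y => fderiv ℝ F y) x ξ ξ) (v : H) :
    ν * ‖v‖ ^ 2 ≤ ⟪v, gradient F v⟫ := by
  have hΨ : ContDiff ℝ 1 (fun x => fderiv ℝ F x) := hF.fderiv_right (by norm_num)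
  set φ : ℝ → ℝ := fun r => fderiv ℝ F (r • v) v with hφ
  have hder : ∀ r : ℝ, HasDerivAt φ (fderiv ℝ (fun x => fderiv ℝ F x) (r • v) v v) r := by
    intro r
    have hc : HasDerivAt (fun r : ℝ => r • v) v r := by
      simpa using (hasDerivAt_id r).smul_const v
    have h1 : HasFDerivAt (fun x => fderiv ℝ F x)
        (fderiv ℝ (fun x => fderiv ℝ F x) (r • v)) (r • v) :=
      (hΨ.differentiable one_ne_zero (r • v)).hasFDerivAt
    have h2 := h1.comp_hasDerivAt r hc
    exact (ContinuousLinearMap.apply ℝ ℝ v).hasFDerivAt.comp_hasDerivAt r h2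
  have hdiff : Differentiable ℝ φ := fun r => (hder r).differentiableAt
  have hbd : ∀ r, ν * ‖v‖ ^ 2 ≤ deriv φ r := fun r => by
    rw [(hder r).deriv]; exact hlow _ _
  have key := mul_sub_le_image_sub_of_le_deriv hdiff hbd zero_le_one
  have e1 : φ 1 = ⟪gradient F v, v⟫ := by
    simp [hφ, gradient, InnerProductSpace.toDual_symm_apply]
  have e0 : φ 0 = 0 := by
    have : φ 0 = ⟪gradient F 0, v⟫ := by
      simp [hφ, gradient, InnerProductSpace.toDual_symm_apply]
    simp [this, h0]
  rw [real_inner_comm]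
  rw [e1, e0] at key
  linarith

lemma young_aux (b m ν k U W : ℝ) (hb : 0 < b) (hkm : k < m) (hkv : k < ν)
    (hY : b ^ 2 / 16 < (m - k) * (ν - k)) (hU : 0 ≤ U) (hW : 0 ≤ W) :
    (b / 2) * U * W ≤ (ν - k) * U ^ 2 + (m - k) * W ^ 2 := by
  have hc : (0:ℝ) ≤ (b / 2) * U * W := by positivity
  have ha : (0:ℝ) ≤ (ν - k) * U ^ 2 + (m - k) * W ^ 2 := by nlinarith [sq_nonneg U, sq_nonneg W]
  have hsq : ((b / 2) * U * W) ^ 2 ≤ ((ν - k) * U ^ 2 + (m - k) * W ^ 2) ^ 2 := by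
    nlinarith [sq_nonneg ((ν - k) * U ^ 2 - (m - k) * W ^ 2), sq_nonneg (U * W), hY.le]
  exact (pow_le_pow_iff_left₀ hc ha (by norm_num)).mp hsq

theorem stmt9
    {H : Type*} [NormedAddCommGroup H] [InnerProductSpace ℝ H] [CompleteSpace H]
    (A : H → H) (F F_T : H → ℝ) (S : H →L[ℝ] H)
    (γ b ν ν_T M_T m k : ℝ)
    (hγ : 0 < γ) (hb : 0 < b) (hν : 0 < ν) (hνT : 0 < ν_T) (hMT : 0 < M_T)
    (hm : 0 < m) (hk : 0 < k) (hkmin : k < min m ν)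
    (hYoung : b ^ 2 / 16 < (m - k) * (ν - k))
    (hC1 : ContDiff ℝ 1 A) (hA0 : A 0 = 0)
    (hDA : ∀ x : H, ‖fderiv ℝ A x‖ ≤ γ)
    (hAquad : ∀ x : H, ‖A x - fderiv ℝ A x x‖ ≤ (b / 2) * ‖x‖)
    (hFC2 : ContDiff ℝ 2 F) (hFTC2 : ContDiff ℝ 2 F_T)
    (hDF0 : gradient F 0 = 0) (hDFT0 : gradient F_T 0 = 0)
    (hFlow : ∀ x ξ : H, ν * ‖ξ‖ ^ 2 ≤ fderiv ℝ (fun y => fderiv ℝ F y) x ξ ξ)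
    (hFTlow : ∀ x ξ : H, ν_T * ‖ξ‖ ^ 2 ≤ fderiv ℝ (fun y => fderiv ℝ F_T y) x ξ ξ)
    (hFTup : ∀ x ξ : H, fderiv ℝ (fun y => fderiv ℝ F_T y) x ξ ξ ≤ M_T * ‖ξ‖ ^ 2)
    (hSsa : ∀ ξ η : H, ⟪S ξ, η⟫ = ⟪ξ, S η⟫)
    (hScoer : ∀ ξ : H, m * ‖ξ‖ ^ 2 ≤ ⟪S ξ, ξ⟫)
    (t T : ℝ) (htT : t ≤ T) (x : H)
    (y z : ℝ → H)
    (hy : ∀ s ∈ Icc t T, HasDerivAt y (A (y s) - S (z s)) s)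
    (hz : ∀ s ∈ Icc t T,
      HasDerivAt z (-((adjoint (fderiv ℝ A (y s))) (z s) + gradient F (y s))) s)
    (hyt : y t = x) (hzT : z T = gradient F_T (y T)) :
    ⟪x, z t⟫ ≥ ν_T * ‖y T‖ ^ 2 + k * ∫ s in t..T, (‖y s‖ ^ 2 + ‖z s‖ ^ 2) := by
  have hkm : k < m := lt_of_lt_of_le hkmin (min_le_left _ _)
  have hkv : k < ν := lt_of_lt_of_le hkmin (min_le_right _ _)
  have hgrad : ∀ v, ν * ‖v‖ ^ 2 ≤ ⟪v, gradient F v⟫ :=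
    grad_lower_aux F ν hFC2 hDF0 hFlow
  have hgradT : ∀ v, ν_T * ‖v‖ ^ 2 ≤ ⟪v, gradient F_T v⟫ :=
    grad_lower_aux F_T ν_T hFTC2 hDFT0 hFTlow
  set D : ℝ → ℝ := fun s =>
    ⟪y s, -((adjoint (fderiv ℝ A (y s))) (z s) + gradient F (y s))⟫
      + ⟪A (y s) - S (z s), z s⟫ with hDdef
  have hgD : ∀ s ∈ Icc t T, HasDerivAt (fun s => (⟪y s, z s⟫ : ℝ)) (D s) s :=
    fun s hs => (hy s hs).inner ℝ (hz s hs)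
  have hDle : ∀ s ∈ Icc t T, D s ≤ -k * (‖y s‖ ^ 2 + ‖z s‖ ^ 2) := by
    intro s _
    have hadj : ⟪y s, (adjoint (fderiv ℝ A (y s))) (z s)⟫ = ⟪(fderiv ℝ A (y s)) (y s), z s⟫ :=
      adjoint_inner_right _ _ _
    have hcs : (⟪A (y s), z s⟫ : ℝ) - ⟪(fderiv ℝ A (y s)) (y s), z s⟫
        ≤ (b / 2) * ‖y s‖ * ‖z s‖ := by
      have h1 : (⟪A (y s) - (fderiv ℝ A (y s)) (y s), z s⟫ : ℝ)
          ≤ ‖A (y s) - (fderiv ℝ A (y s)) (y s)‖ * ‖z s‖ := real_inner_le_norm _ _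
      have h2 : ‖A (y s) - (fderiv ℝ A (y s)) (y s)‖ * ‖z s‖ ≤ ((b / 2) * ‖y s‖) * ‖z s‖ :=
        mul_le_mul_of_nonneg_right (hAquad (y s)) (norm_nonneg _)
      rw [inner_sub_left] at h1
      calc (⟪A (y s), z s⟫ : ℝ) - ⟪(fderiv ℝ A (y s)) (y s), z s⟫
          ≤ ((b / 2) * ‖y s‖) * ‖z s‖ := le_trans h1 h2
        _ = (b / 2) * ‖y s‖ * ‖z s‖ := by ring
    have hS := hScoer (z s)
    have hgu := hgrad (y s)
    have hY := young_aux b m ν k ‖y s‖ ‖z s‖ hb hkm hkv hYoung (norm_nonneg _) (norm_nonneg _)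
    have he : D s = ⟪A (y s), z s⟫ - ⟪(fderiv ℝ A (y s)) (y s), z s⟫
        - ⟪S (z s), z s⟫ - ⟪y s, gradient F (y s)⟫ := by
      simp only [hDdef, inner_neg_right, inner_add_right, inner_sub_left, hadj]
      ring
    rw [he]
    nlinarith [hcs, hS, hgu, hY]
  -- continuity
  have hyc : ContinuousOn y (Icc t T) := fun s hs => ((hy s hs).continuousAt).continuousWithinAt
  have hzc : ContinuousOn z (Icc t T) := fun s hs => ((hz s hs).continuousAt).continuousWithinAt
  have hfAc : Continuous (fderiv ℝ A) := hC1.continuous_fderiv one_ne_zero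
  have hgradFc : Continuous (gradient F) := by
    have h := hFC2.continuous_fderiv two_ne_zero
    exact ((InnerProductSpace.toDual ℝ H).symm.continuous.comp h : _)
  have hadjc : Continuous (fun L : H →L[ℝ] H => adjoint L) :=
    (ContinuousLinearMap.adjoint (𝕜 := ℝ) (E := H) (F := H)).continuous
  have happly : Continuous (fun p : (H →L[ℝ] H) × H => p.1 p.2) :=
    isBoundedBilinearMap_apply.continuous
  have hDc : ContinuousOn D (Icc t T) := by
    apply ContinuousOn.add
    · apply ContinuousOn.inner hyc
      apply ContinuousOn.neg
      apply ContinuousOn.add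
      · exact happly.comp_continuousOn
          (ContinuousOn.prodMk (((hadjc.comp hfAc).comp_continuousOn hyc)) hzc)
      · exact hgradFc.comp_continuousOn hyc
    · exact ContinuousOn.inner
        ((hC1.continuous.comp_continuousOn hyc).sub (S.continuous.comp_continuousOn hzc)) hzc
  have hRHSc : ContinuousOn (fun s => ‖y s‖ ^ 2 + ‖z s‖ ^ 2) (Icc t T) :=
    ((hyc.norm.pow 2).add (hzc.norm.pow 2))
  have hDi : IntervalIntegrable D MeasureTheory.volume t T :=
    (by rwa [uIcc_of_le htT] : ContinuousOn D (uIcc t T)).intervalIntegrable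
  have hRHSi : IntervalIntegrable (fun s => ‖y s‖ ^ 2 + ‖z s‖ ^ 2) MeasureTheory.volume t T :=
    (by rwa [uIcc_of_le htT] : ContinuousOn (fun s => ‖y s‖ ^ 2 + ‖z s‖ ^ 2)
      (uIcc t T)).intervalIntegrable
  have hRHSi' : IntervalIntegrable (fun s => -k * (‖y s‖ ^ 2 + ‖z s‖ ^ 2))
      MeasureTheory.volume t T := hRHSi.const_mul _
  have hFTC : ∫ s in t..T, D s = ⟪y T, z T⟫ - ⟪y t, z t⟫ :=
    intervalIntegral.integral_eq_sub_of_hasDerivAt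
      (fun s hs => hgD s (by rwa [uIcc_of_le htT] at hs)) hDi
  have hmono : ∫ s in t..T, D s ≤ ∫ s in t..T, -k * (‖y s‖ ^ 2 + ‖z s‖ ^ 2) :=
    intervalIntegral.integral_mono_on htT hDi hRHSi' hDle
  have hpull : ∫ s in t..T, -k * (‖y s‖ ^ 2 + ‖z s‖ ^ 2)
      = -k * ∫ s in t..T, (‖y s‖ ^ 2 + ‖z s‖ ^ 2) :=
    intervalIntegral.integral_const_mul _ _
  have hT : ν_T * ‖y T‖ ^ 2 ≤ ⟪y T, z T⟫ := by rw [hzT]; exact hgradT (y T)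
  rw [← hyt]
  rw [hpull] at hmono
  rw [hFTC] at hmono
  linarith
end

section
/- Under the assumptions of the first a priori estimate (coercivity constants ν, ν_T, m, bound γ on ‖DA‖, bound M on D²F, bound M_T on D²F_T, the Young-inequality condition b²/16 < (m−k)(ν−k) for 0<k<min(m,ν)), any solution (y, z) of the forward-backward system with y(t) = x satisfies |z(t)| ≤ |x| · ( M_T²/ν_T + (γ² + M²)(T − t)/k ). -/
open Set intervalIntegral ContinuousLinearMap
open scoped RealInnerProductSpace

lemma grad_coercive {H : Type*} [NormedAddCommGroup H] [InnerProductSpace ℝ H] [CompleteSpace H]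
    (G : H → ℝ) (c : ℝ) (hG : ContDiff ℝ 2 G) (h0 : gradient G 0 = 0)
    (hlow : ∀ x ξ : H, c * ‖ξ‖ ^ 2 ≤ fderiv ℝ (fun y => fderiv ℝ G y) x ξ ξ) (w : H) :
    c * ‖w‖ ^ 2 ≤ ⟪gradient G w, w⟫ := by
  have hfd : ContDiff ℝ 1 (fderiv ℝ G) := hG.fderiv_right (by norm_num)
  have hfd2 : Continuous (fderiv ℝ (fderiv ℝ G)) :=
    (hfd.fderiv_right (by norm_num) : ContDiff ℝ 0 _).continuous
  set g : ℝ → ℝ := fun s => fderiv ℝ G (s • w) w with hgdef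
  set g' : ℝ → ℝ := fun s => fderiv ℝ (fderiv ℝ G) (s • w) w w with hg'def
  have hsmul : ∀ s : ℝ, HasDerivAt (fun u : ℝ => u • w) w s := by
    intro s
    simpa using (hasDerivAt_id s).smul_const w
  have hderiv : ∀ s : ℝ, HasDerivAt g (g' s) s := by
    intro s
    have h1 : HasFDerivAt (fderiv ℝ G) (fderiv ℝ (fderiv ℝ G) (s • w)) (s • w) :=
      (hfd.differentiable one_ne_zero (s • w)).hasFDerivAt
    have h2 : HasDerivAt (fun u : ℝ => fderiv ℝ G (u • w))
        (fderiv ℝ (fderiv ℝ G) (s • w) w) s := h1.comp_hasDerivAt s (hsmul s)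
    have h3 := h2.clm_apply (hasDerivAt_const s w)
    simpa using h3
  have hcont : Continuous g' := by
    have : Continuous fun s : ℝ => s • w := by continuity
    exact ((hfd2.comp this).clm_apply continuous_const).clm_apply continuous_const
  have hint : IntervalIntegrable g' MeasureTheory.volume 0 1 :=
    hcont.intervalIntegrable 0 1
  have hftc : ∫ s in (0:ℝ)..1, g' s = g 1 - g 0 :=
    intervalIntegral.integral_eq_sub_of_hasDerivAt (fun s _ => hderiv s) hint
  have hmono : c * ‖w‖ ^ 2 ≤ ∫ s in (0:ℝ)..1, g' s := by
    have : ∫ s in (0:ℝ)..1, c * ‖w‖ ^ 2 ≤ ∫ s in (0:ℝ)..1, g' s := by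
      apply intervalIntegral.integral_mono_on (by norm_num)
        (intervalIntegrable_const) hint
      intro s _
      exact hlow (s • w) w
    simpa using this
  have hg0 : g 0 = 0 := by
    have : fderiv ℝ G ((0:ℝ) • w) w = ⟪gradient G 0, w⟫ := by
      rw [zero_smul]
      exact (InnerProductSpace.toDual_symm_apply).symm
    simp [hgdef, this, h0]
  have hg1 : g 1 = ⟪gradient G w, w⟫ := by
    have : fderiv ℝ G ((1:ℝ) • w) w = ⟪gradient G ((1:ℝ) • w), w⟫ :=
      (InnerProductSpace.toDual_symm_apply).symm
    simp only [hgdef, one_smul] at this ⊢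
    rw [this]
  calc c * ‖w‖ ^ 2 ≤ ∫ s in (0:ℝ)..1, g' s := hmono
    _ = g 1 - g 0 := hftc
    _ = ⟪gradient G w, w⟫ := by rw [hg1, hg0, sub_zero]

lemma young_ineq (b p q u v : ℝ) (hb : 0 < b) (hp : 0 < p) (hq : 0 < q)
    (h : b ^ 2 / 16 < p * q) (hu : 0 ≤ u) (hv : 0 ≤ v) :
    b / 2 * (u * v) ≤ q * u ^ 2 + p * v ^ 2 := by
  have hsp := Real.sq_sqrt hp.le
  have hsq := Real.sq_sqrt hq.le
  have h1 : b ≤ 4 * (Real.sqrt p * Real.sqrt q) := by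
    nlinarith [Real.sqrt_nonneg p, Real.sqrt_nonneg q,
      mul_nonneg (Real.sqrt_nonneg p) (Real.sqrt_nonneg q), sq_nonneg (Real.sqrt p * Real.sqrt q)]
  nlinarith [sq_nonneg (Real.sqrt q * u - Real.sqrt p * v), Real.sqrt_nonneg p,
    Real.sqrt_nonneg q, mul_nonneg hu hv, mul_nonneg (Real.sqrt_nonneg p) (Real.sqrt_nonneg q)]

lemma lam_trick (Z a c xn : ℝ) (hZ : 0 ≤ Z) (hxn : 0 ≤ xn) (hac : 0 < a + c)
    (h : ∀ lam : ℝ, 0 < lam → Z ≤ (a + c) / (4 * lam) + lam * (xn * Z)) :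
    Z ≤ xn * (a + c) := by
  rcases hxn.eq_or_lt with h0 | h0
  · by_contra hcon
    push_neg at hcon
    have hZpos : 0 < Z := by nlinarith
    have h2 := h ((a + c) / (2 * Z)) (by positivity)
    rw [← h0] at h2
    have e1 : (a + c) / (4 * ((a + c) / (2 * Z))) = Z / 2 := by
      field_simp
      ring
    rw [e1] at h2
    simp at h2
    linarith
  · have h2 := h (1 / (2 * xn)) (by positivity)
    have e1 : (a + c) / (4 * (1 / (2 * xn))) = xn * (a + c) / 2 := by
      field_simp
      ring
    have e2 : 1 / (2 * xn) * (xn * Z) = Z / 2 := by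
      field_simp
    rw [e1, e2] at h2
    linarith

set_option maxHeartbeats 2000000 in
theorem stmt10
    {H : Type*} [NormedAddCommGroup H] [InnerProductSpace ℝ H] [CompleteSpace H]
    (A : H → H) (F F_T : H → ℝ) (S : H →L[ℝ] H)
    (γ b ν M ν_T M_T m k : ℝ)
    (hγ : 0 < γ) (hb : 0 < b) (hν : 0 < ν) (hM : 0 < M) (hνT : 0 < ν_T)
    (hMT : 0 < M_T) (hm : 0 < m) (hk : 0 < k) (hkmin : k < min m ν)
    (hYoung : b ^ 2 / 16 < (m - k) * (ν - k))
    (hC1 : ContDiff ℝ 1 A) (hA0 : A 0 = 0)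
    (hDA : ∀ x : H, ‖fderiv ℝ A x‖ ≤ γ)
    (hAquad : ∀ x : H, ‖A x - fderiv ℝ A x x‖ ≤ (b / 2) * ‖x‖)
    (hFC2 : ContDiff ℝ 2 F) (hFTC2 : ContDiff ℝ 2 F_T)
    (hDF0 : gradient F 0 = 0) (hDFT0 : gradient F_T 0 = 0)
    (hFlow : ∀ x ξ : H, ν * ‖ξ‖ ^ 2 ≤ fderiv ℝ (fun y => fderiv ℝ F y) x ξ ξ)
    (hFup : ∀ x ξ : H, fderiv ℝ (fun y => fderiv ℝ F y) x ξ ξ ≤ M * ‖ξ‖ ^ 2)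
    (hFTlow : ∀ x ξ : H, ν_T * ‖ξ‖ ^ 2 ≤ fderiv ℝ (fun y => fderiv ℝ F_T y) x ξ ξ)
    (hFTup : ∀ x ξ : H, fderiv ℝ (fun y => fderiv ℝ F_T y) x ξ ξ ≤ M_T * ‖ξ‖ ^ 2)
    (hDFbd : ∀ x : H, ‖gradient F x‖ ≤ M * ‖x‖)
    (hDFTbd : ∀ x : H, ‖gradient F_T x‖ ≤ M_T * ‖x‖)
    (hSsa : ∀ ξ η : H, ⟪S ξ, η⟫ = ⟪ξ, S η⟫)
    (hScoer : ∀ ξ : H, m * ‖ξ‖ ^ 2 ≤ ⟪S ξ, ξ⟫)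
    (t T : ℝ) (htT : t ≤ T) (x : H)
    (y z : ℝ → H)
    (hy : ∀ s ∈ Icc t T, HasDerivAt y (A (y s) - S (z s)) s)
    (hz : ∀ s ∈ Icc t T,
      HasDerivAt z (-((adjoint (fderiv ℝ A (y s))) (z s) + gradient F (y s))) s)
    (hyt : y t = x) (hzT : z T = gradient F_T (y T)) :
    ‖z t‖ ≤ ‖x‖ * (M_T ^ 2 / ν_T + (γ ^ 2 + M ^ 2) * (T - t) / k) := by
  have hkm : k < m := lt_of_lt_of_le hkmin (min_le_left _ _)
  have hkν : k < ν := lt_of_lt_of_le hkmin (min_le_right _ _)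
  -- basic values
  set Z := ‖z t‖ with hZdef
  have hZ0 : 0 ≤ Z := norm_nonneg _
  set P : ℝ := ⟪y T, z T⟫ with hPdef
  -- gradient coercivity at T
  have hPyT : ν_T * ‖y T‖ ^ 2 ≤ P := by
    have h1 := grad_coercive F_T ν_T hFTC2 hDFT0 hFTlow (y T)
    rw [hPdef, hzT, real_inner_comm]
    exact h1
  have hP0 : 0 ≤ P := le_trans (by positivity) hPyT
  have hzT2 : ‖z T‖ ^ 2 ≤ M_T ^ 2 * ‖y T‖ ^ 2 := by
    have h1 : ‖z T‖ ≤ M_T * ‖y T‖ := by rw [hzT]; exact hDFTbd (y T)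
    nlinarith [norm_nonneg (z T), norm_nonneg (y T)]
  have hu2 : ‖z T‖ ^ 2 ≤ M_T ^ 2 / ν_T * P := by
    have h2 : ν_T * ‖z T‖ ^ 2 ≤ ν_T * (M_T ^ 2 * ‖y T‖ ^ 2) := by nlinarith
    rw [div_mul_eq_mul_div, le_div_iff₀ hνT]
    nlinarith
  have hφt : ⟪y t, z t⟫ ≤ ‖x‖ * Z := by
    rw [hyt]
    exact real_inner_le_norm x (z t)
  -- case t = T
  rcases eq_or_lt_of_le htT with rfl | htT'
  · simp only [sub_self, mul_zero, zero_div, add_zero]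
    have hφt' : ν_T * ‖y t‖ ^ 2 ≤ ‖x‖ * Z := le_trans hPyT hφt
    rcases hZ0.eq_or_lt with hz0 | hz0
    · rw [← hz0]
      positivity
    · have hZsq : Z ^ 2 ≤ M_T ^ 2 / ν_T * (‖x‖ * Z) := by
        calc Z ^ 2 ≤ M_T ^ 2 * ‖y t‖ ^ 2 := hzT2
          _ ≤ M_T ^ 2 / ν_T * (ν_T * ‖y t‖ ^ 2) := le_of_eq (by field_simp)
          _ ≤ M_T ^ 2 / ν_T * (‖x‖ * Z) := by
              apply mul_le_mul_of_nonneg_left hφt' (by positivity)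
      have := mul_le_mul_of_nonneg_right hZsq (le_of_lt (inv_pos.mpr hz0))
      calc Z = Z ^ 2 * Z⁻¹ := by field_simp
        _ ≤ M_T ^ 2 / ν_T * (‖x‖ * Z) * Z⁻¹ := this
        _ = ‖x‖ * (M_T ^ 2 / ν_T) := by field_simp
  -- main case t < T
  · -- continuity
    have cy : ContinuousOn y (Icc t T) := fun s hs => ((hy s hs).continuousAt).continuousWithinAt
    have cz : ContinuousOn z (Icc t T) := fun s hs => ((hz s hs).continuousAt).continuousWithinAt
    have cgrad : Continuous (gradient F) := by
      show Continuous fun w => (InnerProductSpace.toDual ℝ H).symm (fderiv ℝ F w)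
      exact (LinearIsometryEquiv.continuous _).comp (hFC2.continuous_fderiv two_ne_zero)
    have cfA : Continuous (fderiv ℝ A) := hC1.continuous_fderiv one_ne_zero
    set w' : ℝ → H := fun s => adjoint (fderiv ℝ A (y s)) (z s) + gradient F (y s) with hw'
    have cw : ContinuousOn w' (Icc t T) := by
      apply ContinuousOn.add
      · exact ContinuousOn.clm_apply
          (((LinearIsometryEquiv.continuous adjoint).comp cfA).comp_continuousOn cy) cz
      · exact cgrad.comp_continuousOn cy
    set D : ℝ → ℝ := fun s => ⟪y s, -w' s⟫ + ⟪A (y s) - S (z s), z s⟫ with hD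
    have hφderiv : ∀ s ∈ Icc t T, HasDerivAt (fun u => ⟪y u, z u⟫) (D s) s := by
      intro s hs
      exact (hy s hs).inner ℝ (hz s hs)
    have cD : ContinuousOn D (Icc t T) := by
      apply ContinuousOn.add
      · exact cy.inner cw.neg
      · exact ((hC1.continuous.comp_continuousOn cy).sub
          (S.continuous.comp_continuousOn cz)).inner cz
    have hIcc : uIcc t T = Icc t T := uIcc_of_le htT
    have hφ : ∫ s in t..T, D s = ⟪y T, z T⟫ - ⟪y t, z t⟫ := by
      apply intervalIntegral.integral_eq_sub_of_hasDerivAt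
      · rw [hIcc]; exact hφderiv
      · exact (cD.mono (by rw [hIcc])).intervalIntegrable
    -- energy bound
    set E : ℝ := ∫ s in t..T, (‖y s‖ ^ 2 + ‖z s‖ ^ 2) with hEdef
    have cE : ContinuousOn (fun s => ‖y s‖ ^ 2 + ‖z s‖ ^ 2) (Icc t T) :=
      ((cy.norm.pow 2).add (cz.norm.pow 2))
    have hEint : IntervalIntegrable (fun s => ‖y s‖ ^ 2 + ‖z s‖ ^ 2) MeasureTheory.volume t T :=
      (cE.mono (by rw [hIcc])).intervalIntegrable
    have hE0 : 0 ≤ E :=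
      intervalIntegral.integral_nonneg htT (fun s _ => by positivity)
    have hD_le : ∀ s ∈ Icc t T, D s ≤ -k * (‖y s‖ ^ 2 + ‖z s‖ ^ 2) := by
      intro s hs
      have hadj : ⟪y s, adjoint (fderiv ℝ A (y s)) (z s)⟫ = ⟪fderiv ℝ A (y s) (y s), z s⟫ :=
        ContinuousLinearMap.adjoint_inner_right _ _ _
      have hgradc : ν * ‖y s‖ ^ 2 ≤ ⟪y s, gradient F (y s)⟫ := by
        rw [real_inner_comm]
        exact grad_coercive F ν hFC2 hDF0 hFlow (y s)
      have hScz : m * ‖z s‖ ^ 2 ≤ ⟪S (z s), z s⟫ := hScoer (z s)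
      have hq : ⟪A (y s) - fderiv ℝ A (y s) (y s), z s⟫ ≤ b / 2 * (‖y s‖ * ‖z s‖) := by
        calc ⟪A (y s) - fderiv ℝ A (y s) (y s), z s⟫
            ≤ ‖A (y s) - fderiv ℝ A (y s) (y s)‖ * ‖z s‖ := real_inner_le_norm _ _
          _ ≤ b / 2 * ‖y s‖ * ‖z s‖ :=
              mul_le_mul_of_nonneg_right (hAquad (y s)) (norm_nonneg _)
          _ = b / 2 * (‖y s‖ * ‖z s‖) := by ring
      have hyoung : b / 2 * (‖y s‖ * ‖z s‖) ≤ (ν - k) * ‖y s‖ ^ 2 + (m - k) * ‖z s‖ ^ 2 :=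
        young_ineq b (m - k) (ν - k) (‖y s‖) (‖z s‖) hb (by linarith) (by linarith) hYoung
          (norm_nonneg _) (norm_nonneg _)
      have hDs : D s = ⟪A (y s) - fderiv ℝ A (y s) (y s), z s⟫ - ⟪S (z s), z s⟫
          - ⟪y s, gradient F (y s)⟫ := by
        simp only [hD, hw']
        rw [inner_neg_right, inner_add_right, inner_sub_left, inner_sub_left, hadj]
        ring
      rw [hDs]
      nlinarith
    have hE : k * E ≤ ⟪y t, z t⟫ - P := by
      have h1 : ∫ s in t..T, D s ≤ ∫ s in t..T, -k * (‖y s‖ ^ 2 + ‖z s‖ ^ 2) :=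
        intervalIntegral.integral_mono_on htT
          ((cD.mono (by rw [hIcc])).intervalIntegrable) (hEint.const_mul _) hD_le
      rw [intervalIntegral.integral_const_mul] at h1
      rw [hφ] at h1
      rw [← hEdef] at h1
      rw [← hPdef] at h1
      linarith
    -- z integral bound
    have hzftc : ∫ s in t..T, -w' s = z T - z t := by
      apply intervalIntegral.integral_eq_sub_of_hasDerivAt
      · rw [hIcc]; exact hz
      · exact ((cw.mono (by rw [hIcc])).neg).intervalIntegrable
    have hZsplit : Z ≤ ‖z T‖ + ∫ s in t..T, ‖w' s‖ := by
      have h1 : z t - z T = ∫ s in t..T, w' s := by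
        rw [← neg_sub (z T) (z t), ← hzftc, ← intervalIntegral.integral_neg]
        simp
      have h2 : ‖z t - z T‖ ≤ ∫ s in t..T, ‖w' s‖ := by
        rw [h1]
        exact intervalIntegral.norm_integral_le_integral_norm htT
      calc Z = ‖z T + (z t - z T)‖ := by rw [hZdef]; congr 1; abel
        _ ≤ ‖z T‖ + ‖z t - z T‖ := norm_add_le _ _
        _ ≤ ‖z T‖ + ∫ s in t..T, ‖w' s‖ := by linarith
    set I : ℝ := ∫ s in t..T, ‖w' s‖ with hIdef
    have cg : ContinuousOn (fun s => ‖w' s‖) (Icc t T) := cw.norm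
    have hgint : IntervalIntegrable (fun s => ‖w' s‖) MeasureTheory.volume t T :=
      (cg.mono (by rw [hIcc])).intervalIntegrable
    have hg2int : IntervalIntegrable (fun s => ‖w' s‖ ^ 2) MeasureTheory.volume t T :=
      ((cg.pow 2).mono (by rw [hIcc])).intervalIntegrable
    have hg2 : ∀ s ∈ Icc t T, ‖w' s‖ ^ 2 ≤ (γ ^ 2 + M ^ 2) * (‖y s‖ ^ 2 + ‖z s‖ ^ 2) := by
      intro s hs
      have h1 : ‖w' s‖ ≤ γ * ‖z s‖ + M * ‖y s‖ := by
        calc ‖w' s‖ ≤ ‖adjoint (fderiv ℝ A (y s)) (z s)‖ + ‖gradient F (y s)‖ := norm_add_le _ _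
          _ ≤ γ * ‖z s‖ + M * ‖y s‖ := by
              apply add_le_add
              · calc ‖adjoint (fderiv ℝ A (y s)) (z s)‖
                    ≤ ‖adjoint (fderiv ℝ A (y s))‖ * ‖z s‖ := le_opNorm _ _
                  _ = ‖fderiv ℝ A (y s)‖ * ‖z s‖ := by
                      rw [LinearIsometryEquiv.norm_map]
                  _ ≤ γ * ‖z s‖ := mul_le_mul_of_nonneg_right (hDA (y s)) (norm_nonneg _)
              · exact hDFbd (y s)
      nlinarith [sq_nonneg (γ * ‖y s‖ - M * ‖z s‖), norm_nonneg (w' s), norm_nonneg (y s),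
        norm_nonneg (z s), mul_nonneg hγ.le (norm_nonneg (z s)),
        mul_nonneg hM.le (norm_nonneg (y s))]
    have hIg2 : ∫ s in t..T, ‖w' s‖ ^ 2 ≤ (γ ^ 2 + M ^ 2) * E := by
      have h1 : ∫ s in t..T, ‖w' s‖ ^ 2 ≤
          ∫ s in t..T, (γ ^ 2 + M ^ 2) * (‖y s‖ ^ 2 + ‖z s‖ ^ 2) :=
        intervalIntegral.integral_mono_on htT hg2int (hEint.const_mul _) hg2
      rwa [intervalIntegral.integral_const_mul, ← hEdef] at h1
    -- the lambda trick
    have hTt : 0 < T - t := by linarith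
    set a : ℝ := M_T ^ 2 / ν_T with hadef
    set c : ℝ := (γ ^ 2 + M ^ 2) * (T - t) / k with hcdef
    have ha0 : 0 < a := by positivity
    have hc0 : 0 < c := by positivity
    rw [show ‖x‖ * (M_T ^ 2 / ν_T + (γ ^ 2 + M ^ 2) * (T - t) / k) = ‖x‖ * (a + c) by rw [hadef, hcdef]]
    apply lam_trick Z a c ‖x‖ hZ0 (norm_nonneg x) (by linarith)
    intro lam hlam
    -- bound ‖z T‖
    have hzTbd : ‖z T‖ ≤ a / (4 * lam) + lam * P := by
      have key : 4 * lam * ‖z T‖ ≤ a + 4 * lam ^ 2 * P := by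
        nlinarith [sq_nonneg (a - 2 * lam * ‖z T‖),
          mul_le_mul_of_nonneg_left hu2 (by positivity : (0:ℝ) ≤ 4 * lam ^ 2), ha0]
      have heq : a / (4 * lam) + lam * P = (a + 4 * lam ^ 2 * P) / (4 * lam) := by
        field_simp
      rw [heq, le_div_iff₀ (by positivity)]
      nlinarith [key]
    -- bound I
    set ε : ℝ := c / (2 * lam * (T - t)) with hεdef
    have hε0 : 0 < ε := by positivity
    clear_value Z P w' D E I ε
    have hIbd1 : I ≤ (1 / (2 * ε)) * (∫ s in t..T, ‖w' s‖ ^ 2) + ε / 2 * (T - t) := by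
      have hpt : ∀ s ∈ Icc t T, ‖w' s‖ ≤ (1 / (2 * ε)) * ‖w' s‖ ^ 2 + ε / 2 := by
        intro s _
        have h2 : 2 * ε * ‖w' s‖ ≤ ‖w' s‖ ^ 2 + ε * ε := by
          nlinarith [sq_nonneg (‖w' s‖ - ε)]
        calc ‖w' s‖ = (2 * ε * ‖w' s‖) / (2 * ε) := by field_simp
          _ ≤ (‖w' s‖ ^ 2 + ε * ε) / (2 * ε) :=
              (div_le_div_iff_of_pos_right (show (0:ℝ) < 2 * ε by positivity)).mpr h2
          _ = (1 / (2 * ε)) * ‖w' s‖ ^ 2 + ε / 2 := by field_simp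
      have h4 : I ≤ ∫ s in t..T, ((1 / (2 * ε)) * ‖w' s‖ ^ 2 + ε / 2) := by
        rw [hIdef]
        exact intervalIntegral.integral_mono_on htT hgint
          ((hg2int.const_mul _).add intervalIntegrable_const) hpt
      rwa [intervalIntegral.integral_add (hg2int.const_mul _) intervalIntegrable_const,
        intervalIntegral.integral_const_mul, intervalIntegral.integral_const,
        smul_eq_mul, mul_comm (T - t) (ε / 2)] at h4
    have he1 : (1 / (2 * ε)) * (γ ^ 2 + M ^ 2) = lam * k := by
      rw [hεdef, hcdef]
      have h1 : T - t ≠ 0 := ne_of_gt hTt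
      have h2 : lam ≠ 0 := ne_of_gt hlam
      have h3 : k ≠ 0 := ne_of_gt hk
      have h4 : γ ^ 2 + M ^ 2 ≠ 0 := by positivity
      field_simp
    have he2 : ε / 2 * (T - t) = c / (4 * lam) := by
      rw [hεdef]
      have h1 : T - t ≠ 0 := ne_of_gt hTt
      have h2 : lam ≠ 0 := ne_of_gt hlam
      field_simp
      ring
    have hIbd : I ≤ lam * (⟪y t, z t⟫ - P) + c / (4 * lam) := by
      have h5 : (1 / (2 * ε)) * (∫ s in t..T, ‖w' s‖ ^ 2) ≤
          (1 / (2 * ε)) * ((γ ^ 2 + M ^ 2) * E) :=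
        mul_le_mul_of_nonneg_left hIg2 (by positivity)
      have h6 : (1 / (2 * ε)) * ((γ ^ 2 + M ^ 2) * E) = lam * (k * E) := by
        rw [← mul_assoc, he1]
        ring
      have h7 : lam * (k * E) ≤ lam * (⟪y t, z t⟫ - P) :=
        mul_le_mul_of_nonneg_left hE hlam.le
      calc I ≤ (1 / (2 * ε)) * (∫ s in t..T, ‖w' s‖ ^ 2) + ε / 2 * (T - t) := hIbd1
        _ ≤ lam * (⟪y t, z t⟫ - P) + c / (4 * lam) := by
            rw [he2]
            have := h5.trans (le_of_eq h6) |>.trans h7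
            linarith
    have hfin : lam * ⟪y t, z t⟫ ≤ lam * (‖x‖ * Z) := mul_le_mul_of_nonneg_left hφt hlam.le
    have hsplit : (a + c) / (4 * lam) = a / (4 * lam) + c / (4 * lam) := add_div a c _
    calc Z ≤ ‖z T‖ + I := hZsplit
      _ ≤ (a / (4 * lam) + lam * P) + (lam * (⟪y t, z t⟫ - P) + c / (4 * lam)) := by
          exact add_le_add hzTbd hIbd
      _ = (a + c) / (4 * lam) + lam * ⟪y t, z t⟫ := by rw [hsplit]; ring
      _ ≤ (a + c) / (4 * lam) + lam * (‖x‖ * Z) := by linarith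
end

section
/- Let A : ℝⁿ → ℝⁿ be continuously differentiable with ‖dA(x)‖ ≤ k for all x. Extend A to H_m = L²_m(ℝⁿ;ℝⁿ) by (A(X))(x) = A(X(x)). Then the extended map is Gâteaux differentiable on H_m with derivative (D_X A(X) Y)(x) = dA(X(x)) Y(x) for all X, Y ∈ H_m. -/
open MeasureTheory Filter
open scoped RealInnerProductSpace Topology

theorem stmt17 {n : ℕ}
    (m : Measure (EuclideanSpace ℝ (Fin n))) [IsProbabilityMeasure m]
    (A : EuclideanSpace ℝ (Fin n) → EuclideanSpace ℝ (Fin n))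
    (k : ℝ) (hk : 0 < k)
    (hC1 : ContDiff ℝ 1 A) (hdA : ∀ x, ‖fderiv ℝ A x‖ ≤ k)
    (X Y : EuclideanSpace ℝ (Fin n) → EuclideanSpace ℝ (Fin n))
    (hX : MemLp X 2 m) (hY : MemLp Y 2 m) :
    ∀ Hf : EuclideanSpace ℝ (Fin n) → EuclideanSpace ℝ (Fin n), MemLp Hf 2 m →
      Tendsto
        (fun ε : ℝ => (1 / ε) * ∫ x, ⟪A (X x + ε • Y x) - A (X x), Hf x⟫ ∂m)
        (𝓝[≠] (0 : ℝ))
        (𝓝 (∫ x, ⟪fderiv ℝ A (X x) (Y x), Hf x⟫ ∂m)) := by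
  intro Hf hHf
  have hdiff : Differentiable ℝ A := hC1.differentiable one_ne_zero
  have hlip : LipschitzWith (Real.toNNReal k) A := by
    apply lipschitzWith_of_nnnorm_fderiv_le hdiff
    intro x
    rw [← NNReal.coe_le_coe, coe_nnnorm, Real.coe_toNNReal k hk.le]
    exact hdA x
  have hfun : ∀ ε : ℝ, (1 / ε) * ∫ x, ⟪A (X x + ε • Y x) - A (X x), Hf x⟫ ∂m
      = ∫ x, ⟪(1 / ε) • (A (X x + ε • Y x) - A (X x)), Hf x⟫ ∂m := by
    intro ε
    rw [← integral_const_mul]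
    simp_rw [real_inner_smul_left]
  simp only [hfun]
  -- dominated convergence
  apply tendsto_integral_filter_of_dominated_convergence
    (fun x => k * (‖Y x‖ * ‖Hf x‖))
  · -- measurability
    filter_upwards with ε
    have h1 : AEStronglyMeasurable (fun x => A (X x + ε • Y x)) m :=
      hC1.continuous.comp_aestronglyMeasurable
        (hX.aestronglyMeasurable.add (hY.aestronglyMeasurable.const_smul ε))
    have h2 : AEStronglyMeasurable (fun x => A (X x)) m :=
      hC1.continuous.comp_aestronglyMeasurable hX.aestronglyMeasurable
    exact (((h1.sub h2).const_smul (1 / ε)).inner hHf.aestronglyMeasurable)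
  · -- bound
    filter_upwards [self_mem_nhdsWithin] with ε (hε : ε ≠ 0)
    filter_upwards with x
    have hd : ‖A (X x + ε • Y x) - A (X x)‖ ≤ k * (|ε| * ‖Y x‖) := by
      have := hlip.dist_le_mul (X x + ε • Y x) (X x)
      rw [dist_eq_norm, dist_eq_norm] at this
      simpa [add_sub_cancel_left, norm_smul, Real.coe_toNNReal k hk.le, Real.norm_eq_abs] using this
    calc ‖⟪(1 / ε) • (A (X x + ε • Y x) - A (X x)), Hf x⟫‖
        ≤ ‖(1 / ε) • (A (X x + ε • Y x) - A (X x))‖ * ‖Hf x‖ := norm_inner_le_norm _ _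
      _ = |1 / ε| * ‖A (X x + ε • Y x) - A (X x)‖ * ‖Hf x‖ := by
          rw [norm_smul, Real.norm_eq_abs]
      _ ≤ |1 / ε| * (k * (|ε| * ‖Y x‖)) * ‖Hf x‖ := by
          gcongr
      _ = k * (‖Y x‖ * ‖Hf x‖) := by
          rw [abs_div, abs_one]
          field_simp
  · -- integrability of the bound
    apply Integrable.const_mul
    apply Integrable.mono' ((hY.norm.integrable_sq).add (hHf.norm.integrable_sq))
    · exact hY.aestronglyMeasurable.norm.mul hHf.aestronglyMeasurable.norm
    · filter_upwards with x
      have h1 : (0:ℝ) ≤ ‖Y x‖ := norm_nonneg _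
      have h2 : (0:ℝ) ≤ ‖Hf x‖ := norm_nonneg _
      rw [Real.norm_of_nonneg (mul_nonneg h1 h2)]
      simp only [Pi.add_apply]
      nlinarith [sq_nonneg (‖Y x‖ - ‖Hf x‖)]
  · -- pointwise convergence
    filter_upwards with x
    have h1 : HasDerivAt (fun t : ℝ => X x + t • Y x) (Y x) 0 := by
      simpa using ((hasDerivAt_id (0 : ℝ)).smul_const (Y x)).const_add (X x)
    have hp : X x + (0 : ℝ) • Y x = X x := by simp
    have hA : HasFDerivAt A (fderiv ℝ A (X x)) ((fun t : ℝ => X x + t • Y x) 0) := by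
      simpa [hp] using (hdiff (X x)).hasFDerivAt
    have hder : HasDerivAt (fun t : ℝ => A (X x + t • Y x)) (fderiv ℝ A (X x) (Y x)) 0 :=
      hA.comp_hasDerivAt 0 h1
    have hslope := hasDerivAt_iff_tendsto_slope.mp hder
    have heq : ∀ ε : ℝ, slope (fun t : ℝ => A (X x + t • Y x)) 0 ε
        = (1 / ε) • (A (X x + ε • Y x) - A (X x)) := by
      intro ε
      simp [slope, vsub_eq_sub, one_div]
    exact ((tendsto_congr heq).mp hslope).inner tendsto_const_nhds
end
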